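/- For any locally small (possibly large) category L, if K = P(L^op)^op then PK is complete; equivalently, the category of small functors from P(L^op) to Set is complete. -/

import Mathlib

open CategoryTheory CategoryTheory.Limits Opposite

universe w v v' u u'

/-- A functor `S : K ⥤ M` is (`w`-)small if it is the left Kan extension of its
restriction to some small full subcategory of `K`. -/
def IsSmallFunctor {K : Type u} [Category.{v} K] {M : Type u'} [Category.{v'} M]
    (S : K ⥤ M) : Prop :=
  ∃ P : K → Prop, Small.{w} (Subtype P) ∧
    S.IsLeftKanExtension (𝟙 (ObjectProperty.ι P ⋙ S))

/-- Representable presheaves are small. -/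
theorem isSmallFunctor_yoneda_obj {K : Type u} [Category.{v} K] (A : K) :
    IsSmallFunctor.{w} (yoneda.obj A) := by
  refine ⟨fun X => X = op A, ?_, ?_⟩
  · have : Subsingleton {X : Kᵒᵖ // X = op A} :=
      ⟨fun X Y => Subtype.ext (X.2.trans Y.2.symm)⟩
    infer_instance
  · set P : Kᵒᵖ → Prop := fun X => X = op A with hP
    set ι := ObjectProperty.ι P with hι
    constructor
    refine ⟨IsInitial.ofUniqueHom (fun E => StructuredArrow.homMk
      (yonedaEquiv.symm (E.hom.app ⟨op A, rfl⟩ (𝟙 A))) ?_) ?_⟩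
    · ext X f
      obtain ⟨X, hX⟩ := X
      subst hX
      have hnat := types_congr_hom (E.hom.naturality
        (show (⟨op A, rfl⟩ : ObjectProperty.FullSubcategory P) ⟶ ⟨op A, rfl⟩ from
          ObjectProperty.homMk f.op)) (𝟙 A)
      simp [ι] at hnat ⊢
      exact hnat.symm
    · intro E m
      apply StructuredArrow.hom_ext
      have hx := types_congr_hom (NatTrans.congr_app m.w ⟨op A, rfl⟩) (𝟙 A)
      have key : m.right = yonedaEquiv.symm (E.hom.app ⟨op A, rfl⟩ (𝟙 A)) := by
        apply yonedaEquiv.injective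
        rw [Equiv.apply_symm_apply]
        refine Eq.trans ?_ hx
        simp [ι, yonedaEquiv]
        rfl
      exact key

/-- The category of small presheaves on `K`. -/
abbrev SmallPresheaf (K : Type u) [Category.{v} K] : Type (max u (v + 1)) :=
  ObjectProperty.FullSubcategory (fun F : Kᵒᵖ ⥤ Type v => IsSmallFunctor.{v} F)

/-- The Yoneda embedding of `K` into its category of small presheaves. -/
def smallYoneda (K : Type u) [Category.{v} K] : K ⥤ SmallPresheaf K where
  obj A := ⟨yoneda.obj A, isSmallFunctor_yoneda_obj A⟩
  map f := ObjectProperty.homMk (yoneda.map f)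

/-- `L` is a limit of `S : C ⥤ A` weighted by `φ : C ⥤ Type v`, i.e. morphisms `a ⟶ L`
correspond, naturally in `a`, to natural transformations `φ ⟶ A(a, S-)`. -/
def IsWeightedLimit {C : Type u} [Category.{v} C] {A : Type u'} [Category.{v'} A]
    (φ : C ⥤ Type v) (S : C ⥤ A) (L : A) : Prop :=
  ∃ e : ∀ a : A, (a ⟶ L) ≃
      ((φ ⋙ uliftFunctor.{v'}) ⟶ (S ⋙ coyoneda.obj (op a) ⋙ uliftFunctor.{v})),
    ∀ (a a' : A) (f : a' ⟶ a) (g : a ⟶ L) (c : C) (x : φ.obj c),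
      (e a' (f ≫ g)).app c ⟨x⟩ = ⟨f ≫ ((e a g).app c ⟨x⟩).down⟩

/-- `L` is a colimit of `T : Cᵒᵖ ⥤ A` weighted by `φ : C ⥤ Type v`, i.e. morphisms `L ⟶ a`
correspond, naturally in `a`, to natural transformations `φ ⟶ A(T-, a)`. -/
def IsWeightedColimit {C : Type u} [Category.{v} C] {A : Type u'} [Category.{v'} A]
    (φ : C ⥤ Type v) (T : Cᵒᵖ ⥤ A) (L : A) : Prop :=
  ∃ e : ∀ a : A, (L ⟶ a) ≃
      ((φ ⋙ uliftFunctor.{v'}) ⟶ (T.rightOp ⋙ yoneda.obj a ⋙ uliftFunctor.{v})),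
    ∀ (a a' : A) (f : a ⟶ a') (g : L ⟶ a) (c : C) (x : φ.obj c),
      (e a' (g ≫ f)).app c ⟨x⟩ = ⟨((e a g).app c ⟨x⟩).down ≫ f⟩

/-- A class of weights with small domains. -/
def WeightClass : Type (v + 1) :=
  ∀ C : Cat.{v, v}, (C ⥤ Type v) → Prop

/-- A category is `Φ`-complete if it has all `φ`-weighted limits for `φ ∈ Φ`. -/
def PhiComplete (Φ : WeightClass.{v}) (A : Type u) [Category.{v'} A] : Prop :=
  ∀ (C : Cat.{v, v}) (φ : C ⥤ Type v), Φ C φ →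
    ∀ S : C ⥤ A, ∃ L : A, IsWeightedLimit φ S L

/-- A category is `Φ`-cocomplete if it has all `φ`-weighted colimits for `φ ∈ Φ`. -/
def PhiCocomplete (Φ : WeightClass.{v}) (A : Type u) [Category.{v'} A] : Prop :=
  ∀ (C : Cat.{v, v}) (φ : C ⥤ Type v), Φ C φ →
    ∀ T : Cᵒᵖ ⥤ A, ∃ L : A, IsWeightedColimit φ T L

/-- A functor is `Φ`-continuous if it preserves all `φ`-weighted limits for `φ ∈ Φ`. -/
def PhiContinuous (Φ : WeightClass.{v}) {A : Type u} [Category.{v'} A]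
    {B : Type u'} [Category.{w} B] (F : A ⥤ B) : Prop :=
  ∀ (C : Cat.{v, v}) (φ : C ⥤ Type v), Φ C φ →
    ∀ (S : C ⥤ A) (L : A), IsWeightedLimit φ S L → IsWeightedLimit φ (S ⋙ F) (F.obj L)

/-- The closure of a collection `P` of objects of `A` under `Φ`-weighted colimits. -/
inductive PhiClosure (Φ : WeightClass.{v}) {A : Type u} [Category.{v'} A]
    (P : A → Prop) : A → Prop
  | base {X : A} (hX : P X) : PhiClosure Φ P X
  | colim {C : Cat.{v, v}} (φ : C ⥤ Type v) (hφ : Φ C φ) (T : Cᵒᵖ ⥤ A)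
      (hT : ∀ c : Cᵒᵖ, PhiClosure Φ P (T.obj c)) {L : A}
      (hL : IsWeightedColimit φ T L) : PhiClosure Φ P L

/-- The smallness condition on a class of weights: for every small `C`, the closure of the
representables in the presheaf category of `C` under `Φ`-weighted colimits is small. -/
def SmallnessCondition (Φ : WeightClass.{v}) : Prop :=
  ∀ C : Cat.{v, v}, EssentiallySmall.{v} (ObjectProperty.FullSubcategory (PhiClosure Φ
    (fun F : Cᵒᵖ ⥤ Type v => ∃ c : C, Nonempty (F ≅ yoneda.obj c))))

/-- The soundness condition on a class of weights: for every small `Φ`-complete `D` and every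
`Φ`-continuous `ψ : D ⥤ Type v`, the weighted-colimit functor `ψ * (-) : [Dᵒᵖ, Type v] ⥤ Type v`
(i.e. the small-colimit-preserving extension of `ψ` along the Yoneda embedding) is
`Φ`-continuous. -/
def SoundnessCondition (Φ : WeightClass.{v}) : Prop :=
  ∀ D : Cat.{v, v}, PhiComplete Φ D → ∀ ψ : D ⥤ Type v, PhiContinuous Φ ψ →
    ∀ T : (Dᵒᵖ ⥤ Type v) ⥤ Type v, PreservesColimitsOfSize.{v, v} T →
      Nonempty ((yoneda : D ⥤ _) ⋙ T ≅ ψ) → PhiContinuous Φ T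

/-- `φ` belongs to the saturation of `Φ` if it lies in the closure of the representables
under `Φ`-weighted colimits in the presheaf category over its domain. -/
def InSaturation (Φ : WeightClass.{v}) (C : Cat.{v, v}) (φ : C ⥤ Type v) : Prop :=
  PhiClosure Φ (fun F : C ⥤ Type v => ∃ c : Cᵒᵖ, Nonempty (F ≅ coyoneda.obj c)) φ

/-- A category `J` is `α`-filtered when every diagram with fewer than `α` arrows
admits a cocone. -/
def IsCardinalFiltered (J : Type u) [Category.{v'} J] (α : Cardinal.{v}) : Prop :=
  ∀ D : Cat.{v, v}, Cardinal.mk (Arrow D) < α → ∀ F : D ⥤ J, Nonempty (Cocone F)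

/-- An object `X` is `α`-presentable when its hom-functor preserves `α`-filtered colimits. -/
def IsPresentableObj {K : Type u} [Category.{v} K] (α : Cardinal.{v}) (X : K) : Prop :=
  ∀ J : Cat.{v, v}, IsCardinalFiltered J α →
    PreservesColimitsOfShape J (coyoneda.obj (op X))

/-- `K` is locally `α`-presentable: it is cocomplete and has a small full subcategory of
`α`-presentable objects such that every object is an `α`-filtered colimit of objects
from it. -/
def IsLocallyPresentableAt (K : Type u) [Category.{v} K] (α : Cardinal.{v}) : Prop :=
  HasColimitsOfSize.{v, v} K ∧ α.IsRegular ∧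
    ∃ P : K → Prop, Small.{v} (Subtype P) ∧ (∀ X, P X → IsPresentableObj α X) ∧
      ∀ X : K, ∃ J : Cat.{v, v}, IsCardinalFiltered J α ∧
        ∃ (F : J ⥤ K) (c : Cocone F),
          (∀ j, P (F.obj j)) ∧ c.pt = X ∧ Nonempty (IsColimit c)

/-- `K` is locally presentable. -/
def IsLocallyPresentable (K : Type u) [Category.{v} K] : Prop :=
  ∃ α : Cardinal.{v}, IsLocallyPresentableAt K α

/-- `PF : PK ⥤ PL` is the (essentially unique) functor sending a small presheaf `X` to the
left Kan extension of `X` along `Fᵒᵖ`. -/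
def IsPshExtensionOf {K : Type u} {L : Type u'} [Category.{v} K] [Category.{v} L]
    (F : K ⥤ L) (PF : SmallPresheaf K ⥤ SmallPresheaf L) : Prop :=
  ∃ ε : ObjectProperty.ι (fun X : Kᵒᵖ ⥤ Type v => IsSmallFunctor.{v} X) ⟶
      PF ⋙ ObjectProperty.ι (fun X : Lᵒᵖ ⥤ Type v => IsSmallFunctor.{v} X) ⋙
        (Functor.whiskeringLeft Kᵒᵖ Lᵒᵖ (Type v)).obj F.op,
    ∀ X : SmallPresheaf K, Functor.IsLeftKanExtension ((PF.obj X).obj) (ε.app X)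

open MonoidalCategory in
/-- `D` is the Day convolution `∫^{A,B} K(-, A ⊗ B) × F A × G B` of the presheaves
`F` and `G`: it carries a universal wedge. -/
def IsDayConvolution {K : Type u} [Category.{v} K] [MonoidalCategory K]
    (F G D : Kᵒᵖ ⥤ Type v) : Prop :=
  ∃ u : ∀ A B : K, F.obj (op A) → G.obj (op B) → D.obj (op (A ⊗ B)),
    (∀ (A A' B B' : K) (f : A' ⟶ A) (g : B' ⟶ B) (x : F.obj (op A)) (y : G.obj (op B)),
      u A' B' (F.map f.op x) (G.map g.op y)
        = D.map (MonoidalCategory.tensorHom f g).op (u A B x y)) ∧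
    ∀ (H : Kᵒᵖ ⥤ Type v)
      (p : ∀ A B : K, F.obj (op A) → G.obj (op B) → H.obj (op (A ⊗ B))),
      (∀ (A A' B B' : K) (f : A' ⟶ A) (g : B' ⟶ B) (x : F.obj (op A)) (y : G.obj (op B)),
        p A' B' (F.map f.op x) (G.map g.op y)
          = H.map (MonoidalCategory.tensorHom f g).op (p A B x y)) →
      ∃! τ : D ⟶ H, ∀ (A B : K) (x : F.obj (op A)) (y : G.obj (op B)),
        τ.app (op (A ⊗ B)) (u A B x y) = p A B x y

/-- The restricted Yoneda embedding of `M` into presheaves on the full subcategory of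
`β`-presentable objects. -/
def restrictedYoneda (M : Type u) [Category.{v} M] (β : Cardinal.{v}) :
    M ⥤ ((ObjectProperty.FullSubcategory (IsPresentableObj β : M → Prop))ᵒᵖ ⥤ Type v) :=
  yoneda ⋙ (Functor.whiskeringLeft _ _ _).obj (ObjectProperty.ι _).op

namespace Aux6

universe t b a

variable {B : Type a} [Category.{b} B]

/-- An element of `S` at `X` supported on the subcategory `P`. -/
structure Elt (P : B → Prop) (S : B ⥤ Type t) (X : B) where
  ob : B
  hob : P ob
  hom : ob ⟶ X
  elt : S.obj ob

variable {P P' : B → Prop} {S : B ⥤ Type t} {X : B}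

/-- The value of an element. -/
def Elt.val (e : Elt P S X) : S.obj X := S.map e.hom e.elt

/-- One-step relation between elements. -/
def eltRel (P : B → Prop) (S : B ⥤ Type t) (X : B) :
    Elt P S X → Elt P S X → Prop := fun e e' =>
  ∃ f : e.ob ⟶ e'.ob, f ≫ e'.hom = e.hom ∧ S.map f e.elt = e'.elt

/-- Zigzag connectedness of elements. -/
abbrev EltConn (e e' : Elt P S X) : Prop := Relation.EqvGen (eltRel P S X) e e'

/-- `S` is covered by its elements over `P`. -/
def Covers (P : B → Prop) (S : B ⥤ Type t) : Prop :=
  ∀ X : B, (∀ x : S.obj X, ∃ e : Elt P S X, e.val = x) ∧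
    ∀ e e' : Elt P S X, e.val = e'.val → EltConn e e'

def Elt.push (e : Elt P S X) {X' : B} (g : X ⟶ X') : Elt P S X' :=
  ⟨e.ob, e.hob, e.hom ≫ g, e.elt⟩

@[simp] lemma Elt.push_ob (e : Elt P S X) {X' : B} (g : X ⟶ X') : (e.push g).ob = e.ob := rfl
@[simp] lemma Elt.push_elt (e : Elt P S X) {X' : B} (g : X ⟶ X') : (e.push g).elt = e.elt := rfl
@[simp] lemma Elt.push_hom (e : Elt P S X) {X' : B} (g : X ⟶ X') :
    (e.push g).hom = e.hom ≫ g := rfl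

@[simp] lemma Elt.push_val (e : Elt P S X) {X' : B} (g : X ⟶ X') :
    (e.push g).val = S.map g e.val := by
  simp only [Elt.val, Elt.push]; exact FunctorToTypes.map_comp_apply S e.hom g e.elt

@[simp] lemma Elt.push_id (e : Elt P S X) : e.push (𝟙 X) = e := by
  cases e; simp [Elt.push]

lemma Elt.push_push (e : Elt P S X) {X' X'' : B} (g : X ⟶ X') (g' : X' ⟶ X'') :
    (e.push g).push g' = e.push (g ≫ g') := by
  cases e; simp [Elt.push]

lemma eqvGen_map {α : Type*} {β : Type*} {r : α → α → Prop} {r' : β → β → Prop}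
    (f : α → β) (hf : ∀ a b, r a b → r' (f a) (f b)) {x y : α}
    (h : Relation.EqvGen r x y) : Relation.EqvGen r' (f x) (f y) := by
  induction h with
  | rel a b hab => exact .rel _ _ (hf _ _ hab)
  | refl a => exact .refl _
  | symm a b _ ih => exact .symm _ _ ih
  | trans a b c _ _ ih1 ih2 => exact .trans _ _ _ ih1 ih2

lemma eltRel.refl (e : Elt P S X) : eltRel P S X e e :=
  ⟨𝟙 e.ob, by simp, by simp [FunctorToTypes.map_id_apply]⟩

lemma eltRel_push {e e' : Elt P S X} (h : eltRel P S X e e') {X' : B} (g : X ⟶ X') :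
    eltRel P S X' (e.push g) (e'.push g) := by
  obtain ⟨f, h1, h2⟩ := h
  exact ⟨f, by simp [← h1], h2⟩

lemma EltConn.push {e e' : Elt P S X} (h : EltConn e e') {X' : B} (g : X ⟶ X') :
    EltConn (e.push g) (e'.push g) :=
  eqvGen_map _ (fun _ _ hh => eltRel_push hh g) h

/-- Transport an element along an inclusion of predicates. -/
def Elt.mono (hPP : ∀ x, P x → P' x) (e : Elt P S X) : Elt P' S X :=
  ⟨e.ob, hPP _ e.hob, e.hom, e.elt⟩

lemma eltRel_mono (hPP : ∀ x, P x → P' x) {e e' : Elt P S X} (h : eltRel P S X e e') :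
    eltRel P' S X (e.mono hPP) (e'.mono hPP) := h

lemma Covers.mono (hPP : ∀ x, P x → P' x) (hC : Covers P S) : Covers P' S := by
  intro Y
  constructor
  · intro x
    obtain ⟨e, he⟩ := (hC Y).1 x
    exact ⟨e.mono hPP, he⟩
  · intro e e' hv
    obtain ⟨r, hr⟩ := (hC e.ob).1 e.elt
    obtain ⟨r', hr'⟩ := (hC e'.ob).1 e'.elt
    have h1 : eltRel P' S Y ((r.push e.hom).mono hPP) e := ⟨r.hom, rfl, hr⟩
    have h1' : eltRel P' S Y ((r'.push e'.hom).mono hPP) e' := ⟨r'.hom, rfl, hr'⟩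
    have hmid : EltConn ((r.push e.hom).mono hPP) ((r'.push e'.hom).mono hPP) := by
      refine eqvGen_map (Elt.mono hPP) (fun _ _ hh => eltRel_mono hPP hh) ?_
      refine (hC Y).2 _ _ ?_
      rw [Elt.push_val, Elt.push_val, hr, hr']
      exact hv
    exact .trans _ _ _ (.symm _ _ (.rel _ _ h1)) (.trans _ _ _ hmid (.rel _ _ h1'))

section Kan

variable {G : B ⥤ Type t}

noncomputable def repOf (hC : Covers P S) {X : B} (x : S.obj X) : Elt P S X :=
  ((hC X).1 x).choose

lemma repOf_val (hC : Covers P S) {X : B} (x : S.obj X) : (repOf hC x).val = x :=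
  ((hC X).1 x).choose_spec

variable (G) in
def assign (γ : ObjectProperty.ι P ⋙ S ⟶ ObjectProperty.ι P ⋙ G)
    (e : Elt P S X) : G.obj X :=
  G.map e.hom (γ.app ⟨e.ob, e.hob⟩ e.elt)

lemma assign_rel (γ : ObjectProperty.ι P ⋙ S ⟶ ObjectProperty.ι P ⋙ G)
    {e e' : Elt P S X} (h : eltRel P S X e e') : assign G γ e = assign G γ e' := by
  obtain ⟨f, h1, h2⟩ := h
  have hn := types_congr_hom (γ.naturality
    (show (⟨e.ob, e.hob⟩ : ObjectProperty.FullSubcategory P) ⟶ ⟨e'.ob, e'.hob⟩ from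
      ObjectProperty.homMk f)) e.elt
  simp only [ObjectProperty.homMk_hom, Functor.comp_obj, Functor.comp_map, types_comp_apply,
    ObjectProperty.ι_obj, ObjectProperty.ι_map] at hn
  dsimp [assign]
  rw [← h1, FunctorToTypes.map_comp_apply]
  rw [← h2, ← hn]

lemma assign_conn (γ : ObjectProperty.ι P ⋙ S ⟶ ObjectProperty.ι P ⋙ G)
    {e e' : Elt P S X} (h : EltConn e e') : assign G γ e = assign G γ e' := by
  induction h with
  | rel _ _ h => exact assign_rel γ h
  | refl => rfl
  | symm _ _ _ ih => exact ih.symm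
  | trans _ _ _ _ _ ih1 ih2 => exact ih1.trans ih2

lemma assign_push (γ : ObjectProperty.ι P ⋙ S ⟶ ObjectProperty.ι P ⋙ G)
    (e : Elt P S X) {X' : B} (g : X ⟶ X') :
    assign G γ (e.push g) = G.map g (assign G γ e) := by
  dsimp [assign, Elt.push]
  rw [FunctorToTypes.map_comp_apply]

variable (G) in
noncomputable def tau (hC : Covers P S)
    (γ : ObjectProperty.ι P ⋙ S ⟶ ObjectProperty.ι P ⋙ G) : S ⟶ G where
  app X := TypeCat.ofHom fun x => assign G γ (repOf hC x)
  naturality X X' g := by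
    ext x
    have h1 : (repOf hC (S.map g x)).val = ((repOf hC x).push g).val := by
      rw [repOf_val, Elt.push_val, repOf_val]
    have h2 := assign_conn γ ((hC X').2 _ _ h1)
    change assign G γ (repOf hC (S.map g x)) = G.map g (assign G γ (repOf hC x))
    rw [h2, assign_push]

theorem isLeftKanExtension_of_covers (hC : Covers P S) :
    S.IsLeftKanExtension (𝟙 (ObjectProperty.ι P ⋙ S)) := by
  constructor
  refine ⟨IsInitial.ofUniqueHom (fun E => StructuredArrow.homMk (tau E.right hC E.hom) ?_) ?_⟩
  · ext b y
    simp only [NatTrans.comp_app, Functor.LeftExtension.mk_hom, NatTrans.id_app,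
      Functor.whiskeringLeft_obj_obj, Functor.whiskeringLeft_obj_map, Functor.whiskerLeft_app, types_id_apply,
      types_comp_apply]
    show (tau E.right hC E.hom).app b.obj y = E.hom.app b y
    have h0 : (repOf hC y).val = (Elt.val (⟨b.obj, b.property, 𝟙 b.obj, y⟩ : Elt P S b.obj)) := by
      rw [repOf_val]; simp [Elt.val]
    show assign E.right E.hom (repOf hC y) = E.hom.app b y
    rw [assign_conn E.hom ((hC b.obj).2 _ _ h0)]
    dsimp [assign]
    rw [FunctorToTypes.map_id_apply]
  · intro E m
    apply StructuredArrow.hom_ext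
    ext X x
    have hw := fun (b : ObjectProperty.FullSubcategory P) => types_congr_hom (NatTrans.congr_app m.w b)
    set e := repOf hC x with he
    have hx : x = S.map e.hom e.elt := (repOf_val hC x).symm
    have hnat := types_congr_hom (m.right.naturality e.hom) e.elt
    simp only [types_comp_apply] at hnat
    calc m.right.app X x = m.right.app X (S.map e.hom e.elt) := by rw [← hx]
      _ = E.right.map e.hom (m.right.app e.ob e.elt) := hnat
      _ = E.right.map e.hom (E.hom.app ⟨e.ob, e.hob⟩ e.elt) := by
          have := hw ⟨e.ob, e.hob⟩ e.elt
          simp only [NatTrans.comp_app, Functor.LeftExtension.mk_hom, NatTrans.id_app,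
            Functor.whiskeringLeft_obj_obj, Functor.whiskeringLeft_obj_map, Functor.whiskerLeft_app,
            Functor.const_obj_map, types_id_apply, types_comp_apply] at this
          exact congrArg (fun z => E.right.map e.hom z) this
      _ = (tau E.right hC E.hom).app X x := by
          show _ = assign E.right E.hom (repOf hC x)
          rw [← he]; rfl

end Kan

section KanConverse

variable {G : B ⥤ Type t}

variable (P S) in
/-- The subfunctor of `S` of elements covered over `P`. -/
def coveredSub : B ⥤ Type t where
  obj X := {x : S.obj X // ∃ e : Elt P S X, e.val = x}
  map {X X'} g := TypeCat.ofHom fun p => ⟨S.map g p.1, by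
    obtain ⟨e, he⟩ := p.2
    exact ⟨e.push g, by rw [Elt.push_val, he]⟩⟩
  map_id X := by
    ext p
    simp
  map_comp f g := by
    ext p
    simp [FunctorToTypes.map_comp_apply]

variable (P S) in
def coveredSubIncl : coveredSub P S ⟶ S where
  app X := TypeCat.ofHom fun p => p.1
  naturality := by intros; rfl

variable (P S) in
def coveredSubUnit : ObjectProperty.ι P ⋙ S ⟶
    ObjectProperty.ι P ⋙ coveredSub P S where
  app b := TypeCat.ofHom fun y => ⟨y, ⟨⟨b.obj, b.property, 𝟙 b.obj, y⟩, by simp [Elt.val]⟩⟩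
  naturality b b' f := by
    ext y
    apply Subtype.ext
    rfl

theorem covers_surj_of_isLKE
    (h : S.IsLeftKanExtension (𝟙 (ObjectProperty.ι P ⋙ S))) :
    ∀ (X : B) (x : S.obj X), ∃ e : Elt P S X, e.val = x := by
  intro X x
  let τ := S.descOfIsLeftKanExtension (𝟙 _) (coveredSub P S) (coveredSubUnit P S)
  have hτ : τ ≫ coveredSubIncl P S = 𝟙 S := by
    apply S.hom_ext_of_isLeftKanExtension (𝟙 (ObjectProperty.ι P ⋙ S))
    ext b y
    have hfac := types_congr_hom (S.descOfIsLeftKanExtension_fac_app (𝟙 _) (coveredSub P S)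
      (coveredSubUnit P S) b) y
    simp only [NatTrans.comp_app, NatTrans.id_app, Functor.whiskeringLeft_obj_obj, Functor.comp_obj,
      Functor.whiskerLeft_app, types_id_apply, types_comp_apply] at hfac ⊢
    show (coveredSubIncl P S).app _ (τ.app _ y) = y
    rw [show τ.app ((ObjectProperty.ι P).obj b) y
        = (coveredSubUnit P S).app b y from hfac]
    rfl
  have hx := types_congr_hom (NatTrans.congr_app hτ X) x
  simp only [NatTrans.comp_app, types_comp_apply, NatTrans.id_app, types_id_apply] at hx
  obtain ⟨e, he⟩ := (τ.app X x).2
  exact ⟨e, by rw [he]; exact hx⟩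

variable (P S) in
/-- The functor of saturated classes of elements. -/
def satF [∀ Y : B, Small.{t} (Elt P S Y)] : B ⥤ Type t where
  obj X := {q : Shrink.{t} (Elt P S X) → Prop //
    ∀ a c : Shrink.{t} (Elt P S X),
      EltConn ((equivShrink _).symm a) ((equivShrink _).symm c) → q a → q c}
  map {X X'} g := TypeCat.ofHom fun q => ⟨fun c => ∃ a, q.1 a ∧
      EltConn (((equivShrink (Elt P S X)).symm a).push g) ((equivShrink _).symm c),
    by
      rintro c c' hcc' ⟨a, ha, hc⟩
      exact ⟨a, ha, .trans _ _ _ hc hcc'⟩⟩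
  map_id X := by
    ext q c
    constructor
    · rintro ⟨a, ha, hc⟩
      rw [Elt.push_id] at hc
      exact q.2 a c hc ha
    · intro hc
      exact ⟨c, hc, by rw [Elt.push_id]; exact .refl _⟩
  map_comp {X X' X''} f g := by
    ext q c
    constructor
    · rintro ⟨a, ha, hc⟩
      refine ⟨equivShrink _ (((equivShrink (Elt P S X)).symm a).push f),
        ⟨a, ha, by rw [Equiv.symm_apply_apply]; exact .refl _⟩, ?_⟩
      rw [Equiv.symm_apply_apply, Elt.push_push]
      exact hc
    · rintro ⟨m, ⟨a, ha, ham⟩, hmc⟩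
      refine ⟨a, ha, ?_⟩
      rw [← Elt.push_push]
      exact .trans _ _ _ (ham.push g) hmc

variable (P S) in
def satUnit [∀ Y : B, Small.{t} (Elt P S Y)] : ObjectProperty.ι P ⋙ S ⟶
    ObjectProperty.ι P ⋙ satF P S where
  app b := TypeCat.ofHom fun y => ⟨fun a => EltConn (⟨b.obj, b.property, 𝟙 b.obj, y⟩ : Elt P S b.obj)
      ((equivShrink _).symm a),
    fun a c hac ha => .trans _ _ _ ha hac⟩
  naturality b b' f := by
    refine ConcreteCategory.hom_ext _ _ (fun y => Subtype.ext (funext (fun c => propext ?_)))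
    show EltConn (⟨b'.obj, b'.property, 𝟙 b'.obj,
        S.map ((ObjectProperty.ι P).map f) y⟩ : Elt P S b'.obj)
        ((equivShrink _).symm c) ↔
      (∃ a, EltConn (⟨b.obj, b.property, 𝟙 b.obj, y⟩ : Elt P S b.obj)
        ((equivShrink _).symm a) ∧
        EltConn (((equivShrink (Elt P S b.obj)).symm a).push
          ((ObjectProperty.ι P).map f)) ((equivShrink _).symm c))
    have hstep : EltConn ((⟨b.obj, b.property, 𝟙 b.obj, y⟩ : Elt P S b.obj).push
        ((ObjectProperty.ι P).map f))
        (⟨b'.obj, b'.property, 𝟙 b'.obj, S.map ((ObjectProperty.ι P).map f) y⟩ :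
          Elt P S b'.obj) :=
      .rel _ _ ⟨(ObjectProperty.ι P).map f, by simp, rfl⟩
    constructor
    · intro hc
      refine ⟨equivShrink _ ⟨b.obj, b.property, 𝟙 b.obj, y⟩,
        by rw [Equiv.symm_apply_apply]; exact .refl _, ?_⟩
      rw [Equiv.symm_apply_apply]
      exact .trans _ _ _ hstep hc
    · rintro ⟨a, ha, hc⟩
      exact .trans _ _ _ (.trans _ _ _ (.symm _ _ hstep)
        (ha.push ((ObjectProperty.ι P).map f))) hc

theorem covers_inj_of_isLKE [Small.{t} (Subtype P)]
    (hsm : ∀ (p : Subtype P) (Y : B), Small.{t} (p.1 ⟶ Y))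
    (h : S.IsLeftKanExtension (𝟙 (ObjectProperty.ι P ⋙ S))) :
    ∀ (X : B) (e e' : Elt P S X), e.val = e'.val → EltConn e e' := by
  haveI hsmallElt : ∀ Y : B, Small.{t} (Elt P S Y) := by
    intro Y
    haveI : ∀ p : Subtype P, Small.{t} ((p.1 ⟶ Y) × S.obj p.1) := by
      intro p
      haveI := hsm p Y
      infer_instance
    exact small_of_surjective
      (f := fun q : Σ p : Subtype P, (p.1 ⟶ Y) × S.obj p.1 =>
        (⟨q.1.1, q.1.2, q.2.1, q.2.2⟩ : Elt P S Y))
      (fun e => ⟨⟨⟨e.ob, e.hob⟩, e.hom, e.elt⟩, rfl⟩)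
  intro X e e' hval
  let τ := S.descOfIsLeftKanExtension (𝟙 _) (satF P S) (satUnit P S)
  have key : ∀ (e c : Elt P S X), ((τ.app X e.val).1 (equivShrink _ c) ↔ EltConn e c) := by
    intro e c
    have hnat := types_congr_hom (τ.naturality e.hom) e.elt
    simp only [types_comp_apply] at hnat
    have hfac' : τ.app e.ob e.elt = (satUnit P S).app ⟨e.ob, e.hob⟩ e.elt := by
      have hfac := types_congr_hom (S.descOfIsLeftKanExtension_fac_app (𝟙 _) (satF P S)
        (satUnit P S) ⟨e.ob, e.hob⟩) e.elt
      simp only [NatTrans.comp_app, NatTrans.id_app, Functor.whiskeringLeft_obj_obj, Functor.comp_obj,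
        Functor.whiskerLeft_app, types_id_apply, types_comp_apply] at hfac
      exact hfac
    have hτe : τ.app X e.val = (satF P S).map e.hom
        ((satUnit P S).app ⟨e.ob, e.hob⟩ e.elt) := by
      rw [show e.val = S.map e.hom e.elt from rfl, hnat, hfac']
    rw [hτe]
    show (∃ a, EltConn (⟨e.ob, e.hob, 𝟙 e.ob, e.elt⟩ : Elt P S e.ob)
        ((equivShrink _).symm a) ∧
        EltConn (((equivShrink (Elt P S e.ob)).symm a).push e.hom)
          ((equivShrink _).symm (equivShrink _ c))) ↔ EltConn e c
    rw [Equiv.symm_apply_apply]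
    have he0 : (⟨e.ob, e.hob, 𝟙 e.ob, e.elt⟩ : Elt P S e.ob).push e.hom = e := by
      cases e
      simp [Elt.push]
    constructor
    · rintro ⟨a, ha, hc⟩
      have h2 := ha.push e.hom
      rw [he0] at h2
      exact .trans _ _ _ h2 hc
    · intro hc
      refine ⟨equivShrink _ ⟨e.ob, e.hob, 𝟙 e.ob, e.elt⟩,
        by rw [Equiv.symm_apply_apply]; exact .refl _, ?_⟩
      rw [Equiv.symm_apply_apply, he0]
      exact hc
  have h1 : (τ.app X e'.val).1 (equivShrink _ e') := (key e' e').2 (.refl _)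
  rw [← hval] at h1
  exact (key e e').1 h1

/-- Package both directions. -/
theorem covers_of_isLKE [Small.{t} (Subtype P)]
    (hsm : ∀ (p : Subtype P) (Y : B), Small.{t} (p.1 ⟶ Y))
    (h : S.IsLeftKanExtension (𝟙 (ObjectProperty.ι P ⋙ S))) : Covers P S :=
  fun X => ⟨covers_surj_of_isLKE h X, covers_inj_of_isLKE hsm h X⟩

theorem small_hom_of_surj
    (hsurj : ∀ (X : B) (x : S.obj X), ∃ e : Elt P S X, e.val = x)
    [Small.{t} (Subtype P)] (G : B ⥤ Type t) : Small.{t} (S ⟶ G) := by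
  refine small_of_injective (f := fun τ => fun p : Subtype P => (τ.app p.1 : S.obj p.1 → G.obj p.1)) ?_
  intro τ τ' hττ'
  ext X x
  obtain ⟨e, he⟩ := hsurj X x
  have h1 := types_congr_hom (τ.naturality e.hom) e.elt
  have h2 := types_congr_hom (τ'.naturality e.hom) e.elt
  simp only [types_comp_apply] at h1 h2
  have h3 := congr_fun (congr_fun hττ' ⟨e.ob, e.hob⟩) e.elt
  simp only at h3
  rw [← he]
  show τ.app X (S.map e.hom e.elt) = τ'.app X (S.map e.hom e.elt)
  rw [h1, h2, h3]

end KanConverse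

section Glue

variable {V : Type t} (ob : V → (B ⥤ Type t)) (ed : ∀ s s' : V, (ob s ⟶ ob s') → Prop)

def glueRel (l : B) : (Σ v : V, (ob v).obj l) → (Σ v : V, (ob v).obj l) → Prop :=
  fun n n' => ∃ h : ob n.1 ⟶ ob n'.1, ed n.1 n'.1 h ∧ h.app l n.2 = n'.2

/-- The gluing (colimit) of the family along the edges. -/
def glueF : B ⥤ Type t where
  obj l := Quot (glueRel ob ed l)
  map {l l'} g := TypeCat.ofHom <| Quot.map (fun n => ⟨n.1, (ob n.1).map g n.2⟩) (by
    rintro n n' ⟨h, hh, he⟩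
    refine ⟨h, hh, ?_⟩
    show h.app l' ((ob n.1).map g n.2) = (ob n'.1).map g n'.2
    rw [← he]
    have hnat := types_congr_hom (h.naturality g) n.2
    simp only [types_comp_apply] at hnat
    exact hnat)
  map_id l := by
    ext x
    induction x using Quot.ind with
    | _ n =>
      show Quot.mk (glueRel ob ed l) ⟨n.1, (ob n.1).map (𝟙 l) n.2⟩ = Quot.mk (glueRel ob ed l) n
      rw [FunctorToTypes.map_id_apply]
  map_comp {l l' l''} f g := by
    ext x
    induction x using Quot.ind with
    | _ n =>
      show Quot.mk (glueRel ob ed l'') ⟨n.1, (ob n.1).map (f ≫ g) n.2⟩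
        = Quot.mk (glueRel ob ed l'') ⟨n.1, (ob n.1).map g ((ob n.1).map f n.2)⟩
      rw [FunctorToTypes.map_comp_apply]

def glueLeg (v : V) : ob v ⟶ glueF ob ed where
  app l := TypeCat.ofHom fun x => Quot.mk (glueRel ob ed l) ⟨v, x⟩
  naturality l l' g := rfl

lemma glueLeg_comm {s s' : V} (h : ob s ⟶ ob s') (hh : ed s s' h) :
    h ≫ glueLeg ob ed s' = glueLeg ob ed s := by
  ext l x
  exact (Quot.sound ⟨h, hh, rfl⟩).symm

def glueDesc (Y : B ⥤ Type t) (w : ∀ v, ob v ⟶ Y)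
    (hw : ∀ (s s' : V) (h : ob s ⟶ ob s'), ed s s' h → h ≫ w s' = w s) :
    glueF ob ed ⟶ Y where
  app l := TypeCat.ofHom <| Quot.lift (fun n => (w n.1).app l n.2) (by
    rintro n n' ⟨h, hh, he⟩
    show (w n.1).app l n.2 = (w n'.1).app l n'.2
    rw [← he]
    exact (types_congr_hom (NatTrans.congr_app (hw _ _ h hh) l) n.2).symm)
  naturality l l' g := by
    ext x
    induction x using Quot.ind with
    | _ n => exact types_congr_hom ((w n.1).naturality g) n.2

lemma glueDesc_fac (Y : B ⥤ Type t) (w : ∀ v, ob v ⟶ Y) (hw) (v : V) :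
    glueLeg ob ed v ≫ glueDesc ob ed Y w hw = w v := rfl

theorem covers_glue (Pv : V → B → Prop) (hPv : ∀ v, Covers (Pv v) (ob v)) :
    Covers (fun x => ∃ v, Pv v x) (glueF ob ed) := by
  classical
  set PU : B → Prop := fun x => ∃ v, Pv v x with hPU
  intro l
  constructor
  · intro x
    induction x using Quot.ind with
    | _ n =>
      obtain ⟨e, he⟩ := ((hPv n.1) l).1 n.2
      refine ⟨⟨e.ob, ⟨n.1, e.hob⟩, e.hom, Quot.mk (glueRel ob ed e.ob) ⟨n.1, e.elt⟩⟩, ?_⟩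
      show Quot.mk (glueRel ob ed l) ⟨n.1, (ob n.1).map e.hom e.elt⟩ = Quot.mk _ n
      exact congrArg (fun z => Quot.mk (glueRel ob ed l) ⟨n.1, z⟩) he
  · intro e1 e2 hv
    have basicConn : ∀ (v : V) (c c' : B) (hc : PU c) (hc' : PU c')
        (u : c ⟶ l) (u' : c' ⟶ l) (w : (ob v).obj c) (w' : (ob v).obj c'),
        (ob v).map u w = (ob v).map u' w' →
        EltConn (⟨c, hc, u, Quot.mk (glueRel ob ed c) ⟨v, w⟩⟩ : Elt PU (glueF ob ed) l)
          ⟨c', hc', u', Quot.mk (glueRel ob ed c') ⟨v, w'⟩⟩ := by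
      intro v c c' hc hc' u u' w w' hww
      have hcov : Covers PU (ob v) := (hPv v).mono (fun x hx => ⟨v, hx⟩)
      have hchain := (hcov l).2 ⟨c, hc, u, w⟩ ⟨c', hc', u', w'⟩ hww
      refine eqvGen_map (fun q : Elt PU (ob v) l =>
        (⟨q.ob, q.hob, q.hom, Quot.mk (glueRel ob ed q.ob) ⟨v, q.elt⟩⟩ :
          Elt PU (glueF ob ed) l)) ?_ hchain
      rintro q q' ⟨f, h1, h2⟩
      refine ⟨f, h1, ?_⟩
      show Quot.mk (glueRel ob ed q'.ob) ⟨v, (ob v).map f q.elt⟩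
        = Quot.mk (glueRel ob ed q'.ob) ⟨v, q'.elt⟩
      exact congrArg (fun z => Quot.mk (glueRel ob ed q'.ob) ⟨v, z⟩) h2
    let cb : (Σ v : V, (ob v).obj l) → Elt PU (glueF ob ed) l := fun n =>
      ⟨(((hPv n.1) l).1 n.2).choose.ob, ⟨n.1, (((hPv n.1) l).1 n.2).choose.hob⟩,
        (((hPv n.1) l).1 n.2).choose.hom,
        Quot.mk (glueRel ob ed (((hPv n.1) l).1 n.2).choose.ob)
          ⟨n.1, (((hPv n.1) l).1 n.2).choose.elt⟩⟩
    have cb_spec : ∀ n : Σ v : V, (ob v).obj l,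
        (ob n.1).map ((((hPv n.1) l).1 n.2).choose.hom) ((((hPv n.1) l).1 n.2).choose.elt)
          = n.2 := fun n => (((hPv n.1) l).1 n.2).choose_spec
    have connCB : ∀ n n' : Σ v : V, (ob v).obj l, Relation.EqvGen (glueRel ob ed l) n n' →
        EltConn (cb n) (cb n') := by
      intro n n' hnn
      induction hnn with
      | rel a a' haa =>
        obtain ⟨h, hh, he⟩ := haa
        have key : (ob a'.1).map (((hPv a.1) l).1 a.2).choose.hom
            (h.app (((hPv a.1) l).1 a.2).choose.ob (((hPv a.1) l).1 a.2).choose.elt)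
            = (ob a'.1).map (((hPv a'.1) l).1 a'.2).choose.hom
              (((hPv a'.1) l).1 a'.2).choose.elt := by
          have hnat := types_congr_hom (h.naturality (((hPv a.1) l).1 a.2).choose.hom)
            (((hPv a.1) l).1 a.2).choose.elt
          simp only [types_comp_apply] at hnat
          rw [← hnat, cb_spec a, he, cb_spec a']
        have hbc := basicConn a'.1 (((hPv a.1) l).1 a.2).choose.ob
          (((hPv a'.1) l).1 a'.2).choose.ob
          ⟨a.1, (((hPv a.1) l).1 a.2).choose.hob⟩
          ⟨a'.1, (((hPv a'.1) l).1 a'.2).choose.hob⟩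
          (((hPv a.1) l).1 a.2).choose.hom (((hPv a'.1) l).1 a'.2).choose.hom
          (h.app (((hPv a.1) l).1 a.2).choose.ob (((hPv a.1) l).1 a.2).choose.elt)
          (((hPv a'.1) l).1 a'.2).choose.elt key
        have hEq : cb a = ⟨(((hPv a.1) l).1 a.2).choose.ob,
            ⟨a.1, (((hPv a.1) l).1 a.2).choose.hob⟩,
            (((hPv a.1) l).1 a.2).choose.hom,
            Quot.mk (glueRel ob ed (((hPv a.1) l).1 a.2).choose.ob)
              ⟨a'.1, h.app (((hPv a.1) l).1 a.2).choose.ob (((hPv a.1) l).1 a.2).choose.elt⟩⟩ :=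
          congrArg (fun z =>
            (⟨(((hPv a.1) l).1 a.2).choose.ob, ⟨a.1, (((hPv a.1) l).1 a.2).choose.hob⟩,
              (((hPv a.1) l).1 a.2).choose.hom, z⟩ : Elt PU (glueF ob ed) l))
            (Quot.sound ⟨h, hh, rfl⟩)
        rw [hEq]
        exact hbc
      | refl a => exact .refl _
      | symm a a' _ ih => exact .symm _ _ ih
      | trans a a' a'' _ _ ih1 ih2 => exact .trans _ _ _ ih1 ih2
    obtain ⟨n1, hn1⟩ := Quot.exists_rep e1.elt
    obtain ⟨n2, hn2⟩ := Quot.exists_rep e2.elt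
    have hE1 : (⟨e1.ob, e1.hob, e1.hom, Quot.mk (glueRel ob ed e1.ob) n1⟩ :
        Elt PU (glueF ob ed) l) = e1 :=
      congrArg (fun z => (⟨e1.ob, e1.hob, e1.hom, z⟩ : Elt PU (glueF ob ed) l)) hn1
    have hE2 : (⟨e2.ob, e2.hob, e2.hom, Quot.mk (glueRel ob ed e2.ob) n2⟩ :
        Elt PU (glueF ob ed) l) = e2 :=
      congrArg (fun z => (⟨e2.ob, e2.hob, e2.hom, z⟩ : Elt PU (glueF ob ed) l)) hn2
    have hval1 : e1.val = Quot.mk (glueRel ob ed l) ⟨n1.1, (ob n1.1).map e1.hom n1.2⟩ := by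
      show (glueF ob ed).map e1.hom e1.elt = _
      rw [← hn1]
      rfl
    have hval2 : e2.val = Quot.mk (glueRel ob ed l) ⟨n2.1, (ob n2.1).map e2.hom n2.2⟩ := by
      show (glueF ob ed).map e2.hom e2.elt = _
      rw [← hn2]
      rfl
    have hgl : Relation.EqvGen (glueRel ob ed l) ⟨n1.1, (ob n1.1).map e1.hom n1.2⟩
        ⟨n2.1, (ob n2.1).map e2.hom n2.2⟩ := by
      apply Quot.eq.mp
      rw [← hval1, ← hval2, hv]
    have conn1 : EltConn (⟨e1.ob, e1.hob, e1.hom, Quot.mk (glueRel ob ed e1.ob) n1⟩ :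
        Elt PU (glueF ob ed) l) (cb ⟨n1.1, (ob n1.1).map e1.hom n1.2⟩) := by
      have hc1 := basicConn n1.1 e1.ob _ e1.hob
        ((cb ⟨n1.1, (ob n1.1).map e1.hom n1.2⟩).hob) e1.hom
        ((cb ⟨n1.1, (ob n1.1).map e1.hom n1.2⟩).hom) n1.2 _
        ((cb_spec ⟨n1.1, (ob n1.1).map e1.hom n1.2⟩).symm)
      exact hc1
    have conn2 : EltConn (⟨e2.ob, e2.hob, e2.hom, Quot.mk (glueRel ob ed e2.ob) n2⟩ :
        Elt PU (glueF ob ed) l) (cb ⟨n2.1, (ob n2.1).map e2.hom n2.2⟩) := by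
      have hc2 := basicConn n2.1 e2.ob _ e2.hob
        ((cb ⟨n2.1, (ob n2.1).map e2.hom n2.2⟩).hob) e2.hom
        ((cb ⟨n2.1, (ob n2.1).map e2.hom n2.2⟩).hom) n2.2 _
        ((cb_spec ⟨n2.1, (ob n2.1).map e2.hom n2.2⟩).symm)
      exact hc2
    rw [hE1] at conn1
    rw [hE2] at conn2
    exact .trans _ _ _ conn1 (.trans _ _ _ (connCB _ _ hgl) (.symm _ _ conn2))

end Glue


section Bridge

variable {K : Type a} [Category.{b} K]

theorem isSmallFunctor_of_covers {S : K ⥤ Type t} (P : K → Prop)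
    (hsmall : Small.{t} (Subtype P)) (hC : Covers P S) : IsSmallFunctor.{t} S :=
  ⟨P, hsmall, isLeftKanExtension_of_covers hC⟩

theorem covers_of_isSmallFunctor {S : K ⥤ Type t}
    (hsm : ∀ (c Y : K), Small.{t} (c ⟶ Y)) (hS : IsSmallFunctor.{t} S) :
    ∃ P : K → Prop, Small.{t} (Subtype P) ∧ Covers P S := by
  obtain ⟨P, hPs, hLKE⟩ := hS
  refine ⟨P, hPs, ?_⟩
  haveI := hPs
  exact covers_of_isLKE (fun p Y => hsm p.1 Y) hLKE

lemma small_subtype_exists {ι : Type*} {α : Type*} [Small.{t} ι] (Ps : ι → α → Prop)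
    (h : ∀ i, Small.{t} (Subtype (Ps i))) : Small.{t} {x : α // ∃ i, Ps i x} := by
  haveI : ∀ i, Small.{t} (Subtype (Ps i)) := h
  refine small_of_surjective
    (f := fun q : Σ i, Subtype (Ps i) => (⟨q.2.1, ⟨q.1, q.2.2⟩⟩ : {x : α // ∃ i, Ps i x})) ?_
  rintro ⟨x, ⟨i, hi⟩⟩
  exact ⟨⟨i, ⟨x, hi⟩⟩, rfl⟩

/-- A normalized chain of cospans witnessing connectivity. -/
structure EChain (P : K → Prop) (S : K ⥤ Type t) (X : K) where
  len : ℕ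
  x : ℕ → Elt P S X
  m : ℕ → Elt P S X
  hx : ∀ k, k < len → eltRel P S X (m k) (x k) ∧ eltRel P S X (m k) (x (k + 1))

theorem exists_echain {P : K → Prop} {S : K ⥤ Type t} {X : K} {e e' : Elt P S X}
    (h : EltConn e e') : ∃ c : EChain P S X, c.x 0 = e ∧ c.x c.len = e' := by
  induction h with
  | rel a a' haa =>
    refine ⟨⟨1, fun k => if k = 0 then a else a', fun _ => a, ?_⟩, ?_, ?_⟩
    · intro k hk
      have hk0 : k = 0 := by omega
      subst hk0
      constructor
      · simpa using eltRel.refl a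
      · simpa using haa
    · simp
    · simp
  | refl a => exact ⟨⟨0, fun _ => a, fun _ => a, fun k hk => by omega⟩, rfl, rfl⟩
  | symm a a' _ ih =>
    obtain ⟨c, h0, hn⟩ := ih
    refine ⟨⟨c.len, fun k => c.x (c.len - k), fun k => c.m (c.len - 1 - k), ?_⟩, ?_, ?_⟩
    · intro k hk
      have e1 : c.len - 1 - k + 1 = c.len - k := by omega
      have e2 : c.len - (k + 1) = c.len - 1 - k := by omega
      constructor
      · show eltRel P S X (c.m (c.len - 1 - k)) (c.x (c.len - k))
        have := (c.hx (c.len - 1 - k) (by omega)).2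
        rwa [e1] at this
      · show eltRel P S X (c.m (c.len - 1 - k)) (c.x (c.len - (k + 1)))
        rw [e2]
        exact (c.hx (c.len - 1 - k) (by omega)).1
    · simpa using hn
    · simpa using h0
  | trans a a' a'' _ _ ih1 ih2 =>
    obtain ⟨c1, h01, hn1⟩ := ih1
    obtain ⟨c2, h02, hn2⟩ := ih2
    refine ⟨⟨c1.len + c2.len,
      fun k => if k < c1.len then c1.x k else c2.x (k - c1.len),
      fun k => if k < c1.len then c1.m k else c2.m (k - c1.len), ?_⟩, ?_, ?_⟩
    · intro k hk
      by_cases hkc : k < c1.len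
      · constructor
        · simpa [hkc] using (c1.hx k hkc).1
        · by_cases hk1 : k + 1 < c1.len
          · simpa [hkc, hk1] using (c1.hx k hkc).2
          · have hkeq : k + 1 = c1.len := by omega
            have hcc : c1.x (k + 1) = c2.x (k + 1 - c1.len) := by
              rw [hkeq, hn1, Nat.sub_self, h02]
            have := (c1.hx k hkc).2
            rw [hcc] at this
            simpa [hkc, hk1] using this
      · have hj : k - c1.len < c2.len := by omega
        have hk1 : ¬ k + 1 < c1.len := by omega
        have he : k + 1 - c1.len = k - c1.len + 1 := by omega
        constructor
        · simpa [hkc] using (c2.hx (k - c1.len) hj).1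
        · have := (c2.hx (k - c1.len) hj).2
          rw [← he] at this
          simpa [hkc, hk1] using this
    · by_cases h00 : 0 < c1.len
      · simpa [h00] using h01
      · have hc0 : c1.len = 0 := by omega
        have : c2.x 0 = a := by rw [h02, ← hn1, hc0, h01]
        simpa [h00] using this
    · have hnn : ¬ c1.len + c2.len < c1.len := by omega
      simpa [hnn] using hn2

lemma eqToHom_comp_hom {P : K → Prop} {S : K ⥤ Type t} {X : K} {e e' : Elt P S X}
    (h : e = e') : eqToHom (congrArg Elt.ob h) ≫ e'.hom = e.hom := by
  subst h
  simp

lemma conn_push_of_eq {P : K → Prop} {S : K ⥤ Type t} {X Z : K} {e e' : Elt P S X} (h : e = e')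
    (le : e.ob ⟶ Z) (le' : e'.ob ⟶ Z)
    (hl : eqToHom (congrArg Elt.ob h) ≫ le' = le) :
    S.map le e.elt = S.map le' e'.elt := by
  subst h
  simp only [eqToHom_refl, Category.id_comp] at hl
  rw [hl]

end Bridge

end Aux6

namespace Aux6

section ALevel

variable {C : Type u} [Category.{v} C]

/-- The category of small functors on `C`. -/
abbrev SP (C : Type u) [Category.{v} C] : Type (max u (v + 1)) :=
  ObjectProperty.FullSubcategory (fun F : C ⥤ Type v => IsSmallFunctor.{v} F)

noncomputable def chP (Fa : SP C) : C → Prop :=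
  (covers_of_isSmallFunctor (fun _ _ => inferInstance) Fa.2).choose

lemma chP_small (Fa : SP C) : Small.{v} (Subtype (chP Fa)) :=
  (covers_of_isSmallFunctor (fun _ _ => inferInstance) Fa.2).choose_spec.1

lemma chP_covers (Fa : SP C) : Covers (chP Fa) Fa.1 :=
  (covers_of_isSmallFunctor (fun _ _ => inferInstance) Fa.2).choose_spec.2

theorem smallP_hom (Xa Ya : SP C) : Small.{v} (Xa.1 ⟶ Ya.1) := by
  haveI := chP_small Xa
  exact small_hom_of_surj (fun X x => (chP_covers Xa X).1 x) Ya.1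

structure DiagData (V : Type v) (Q : SP C → Prop) where
  ob : V → SP C
  hob : ∀ v, Q (ob v)
  ed : ∀ s s' : V, ((ob s).1 ⟶ (ob s').1) → Prop

noncomputable def vertexOf {V : Type v} {Q : SP C → Prop} (d : DiagData V Q) : SP C :=
  ⟨glueF (fun v => (d.ob v).1) d.ed,
    isSmallFunctor_of_covers _
      (small_subtype_exists (fun v => chP (d.ob v)) (fun v => chP_small _))
      (covers_glue (fun v => (d.ob v).1) d.ed (fun v => chP (d.ob v))
        (fun v => chP_covers _))⟩

lemma small_diagData (V : Type v) (Q : SP C → Prop) (hQ : Small.{v} (Subtype Q)) :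
    Small.{v} (DiagData V Q) := by
  haveI := hQ
  haveI : ∀ (f : V → Subtype Q) (s s' : V), Small.{v} (Set ((f s).1.1 ⟶ (f s').1.1)) := by
    intro f s s'
    haveI := smallP_hom (f s).1 (f s').1
    infer_instance
  refine small_of_surjective (f := fun q : Σ f : V → Subtype Q,
      ∀ s s' : V, Set ((f s).1.1 ⟶ (f s').1.1) =>
      (⟨fun v => (q.1 v).1, fun v => (q.1 v).2, fun s s' h => h ∈ q.2 s s'⟩ : DiagData V Q)) ?_
  intro d
  exact ⟨⟨fun v => ⟨d.ob v, d.hob v⟩, fun s s' => {h | d.ed s s' h}⟩, rfl⟩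

def stageP (P0 : SP C → Prop) (V1 V2 : Type v) : ℕ → (SP C → Prop)
  | 0 => P0
  | n + 1 => fun a => stageP P0 V1 V2 n a ∨
      (∃ d : DiagData V1 (stageP P0 V1 V2 n), vertexOf d = a) ∨
      (∃ d : DiagData V2 (stageP P0 V1 V2 n), vertexOf d = a)

lemma stageP_mono (P0 : SP C → Prop) (V1 V2 : Type v) {m n : ℕ} (h : m ≤ n) :
    ∀ a, stageP P0 V1 V2 m a → stageP P0 V1 V2 n a := by
  induction n with
  | zero =>
    intro a ha
    have : m = 0 := by omega
    subst this
    exact ha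
  | succ n ih =>
    intro a ha
    by_cases hmn : m ≤ n
    · exact Or.inl (ih hmn a ha)
    · have : m = n + 1 := by omega
      subst this
      exact ha

lemma stageP_small (P0 : SP C → Prop) (V1 V2 : Type v) [hP0 : Small.{v} (Subtype P0)] :
    ∀ n, Small.{v} (Subtype (stageP P0 V1 V2 n))
  | 0 => hP0
  | n + 1 => by
    haveI := stageP_small P0 V1 V2 n
    haveI h1 := small_diagData V1 _ (stageP_small P0 V1 V2 n)
    haveI h2 := small_diagData V2 _ (stageP_small P0 V1 V2 n)
    refine small_of_surjective (f := fun q : Subtype (stageP P0 V1 V2 n) ⊕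
        (DiagData V1 (stageP P0 V1 V2 n) ⊕ DiagData V2 (stageP P0 V1 V2 n)) =>
      (match q with
        | Sum.inl x => ⟨x.1, Or.inl x.2⟩
        | Sum.inr (Sum.inl d) => ⟨vertexOf d, Or.inr (Or.inl ⟨d, rfl⟩)⟩
        | Sum.inr (Sum.inr d) => ⟨vertexOf d, Or.inr (Or.inr ⟨d, rfl⟩)⟩ :
        Subtype (stageP P0 V1 V2 (n + 1)))) ?_
    rintro ⟨a, (ha | ⟨d, rfl⟩ | ⟨d, rfl⟩)⟩
    · exact ⟨Sum.inl ⟨a, ha⟩, rfl⟩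
    · exact ⟨Sum.inr (Sum.inl d), rfl⟩
    · exact ⟨Sum.inr (Sum.inr d), rfl⟩

theorem keyLemma {κ τ : Type v} (Q : SP C → Prop) (X : SP C)
    (F : τ → (SP C ⥤ Type v))
    (aob : κ → SP C) (haob : ∀ k, Q (aob k)) (au : ∀ k, aob k ⟶ X)
    (src tgt : τ → κ)
    (ys : ∀ t, (F t).obj (aob (src t))) (ye : ∀ t, (F t).obj (aob (tgt t)))
    (hch : ∀ t, EltConn (⟨aob (src t), haob _, au _, ys t⟩ : Elt Q (F t) X)
      ⟨aob (tgt t), haob _, au _, ye t⟩) :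
    ∃ (z : SP C) (_ : ∃ d : DiagData (κ ⊕ τ × ℕ × Bool) Q, vertexOf d = z)
      (u : z ⟶ X) (g : ∀ k, aob k ⟶ z),
      (∀ k, g k ≫ u = au k) ∧
      ∀ t, (F t).map (g (src t)) (ys t) = (F t).map (g (tgt t)) (ye t) := by
  classical
  let ch : ∀ t, EChain Q (F t) X := fun t => (exists_echain (hch t)).choose
  have h0 : ∀ t, (ch t).x 0 = ⟨aob (src t), haob _, au _, ys t⟩ :=
    fun t => (exists_echain (hch t)).choose_spec.1
  have hn : ∀ t, (ch t).x (ch t).len = ⟨aob (tgt t), haob _, au _, ye t⟩ :=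
    fun t => (exists_echain (hch t)).choose_spec.2
  let dob : κ ⊕ τ × ℕ × Bool → SP C := fun v => match v with
    | Sum.inl k => aob k
    | Sum.inr (t, i, true) => ((ch t).x i).ob
    | Sum.inr (t, i, false) => ((ch t).m i).ob
  let wX : ∀ v, dob v ⟶ X := fun v => match v with
    | Sum.inl k => au k
    | Sum.inr (t, i, true) => ((ch t).x i).hom
    | Sum.inr (t, i, false) => ((ch t).m i).hom
  let d : DiagData (κ ⊕ τ × ℕ × Bool) Q :=
    ⟨dob, fun v => match v with
      | Sum.inl k => haob k
      | Sum.inr (t, i, true) => ((ch t).x i).hob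
      | Sum.inr (t, i, false) => ((ch t).m i).hob,
     fun s s' φ => φ ≫ (wX s').hom = (wX s).hom⟩
  let z : SP C := vertexOf d
  let lg : ∀ v, dob v ⟶ z := fun v => ObjectProperty.homMk (glueLeg (fun v => (dob v).1) d.ed v)
  let u : z ⟶ X := ObjectProperty.homMk (glueDesc (fun v => (dob v).1) d.ed X.1
    (fun v => (wX v).hom) (fun s s' φ hφ => hφ))
  refine ⟨z, ⟨d, rfl⟩, u, fun k => lg (Sum.inl k), fun k => ObjectProperty.hom_ext _ rfl, ?_⟩
  intro t
  have chainPush : ∀ i, i ≤ (ch t).len →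
      (F t).map (lg (Sum.inr (t, 0, true))) (((ch t).x 0).elt)
        = (F t).map (lg (Sum.inr (t, i, true))) (((ch t).x i).elt) := by
    intro i
    induction i with
    | zero => intro _; rfl
    | succ i ih =>
      intro hi
      have hlt : i < (ch t).len := by omega
      obtain ⟨f1, hf11, hf12⟩ := ((ch t).hx i hlt).1
      obtain ⟨f2, hf21, hf22⟩ := ((ch t).hx i hlt).2
      have l1 : f1 ≫ lg (Sum.inr (t, i, true)) = lg (Sum.inr (t, i, false)) := by
        exact ObjectProperty.hom_ext _ (glueLeg_comm (fun v => (dob v).1) d.ed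
          (s := Sum.inr (t, i, false)) (s' := Sum.inr (t, i, true)) f1.hom
          (congrArg (fun q => q.hom) hf11))
      have l2 : f2 ≫ lg (Sum.inr (t, i + 1, true)) = lg (Sum.inr (t, i, false)) := by
        exact ObjectProperty.hom_ext _ (glueLeg_comm (fun v => (dob v).1) d.ed
          (s := Sum.inr (t, i, false)) (s' := Sum.inr (t, i + 1, true)) f2.hom
          (congrArg (fun q => q.hom) hf21))
      calc (F t).map (lg (Sum.inr (t, 0, true))) (((ch t).x 0).elt)
          = (F t).map (lg (Sum.inr (t, i, true))) (((ch t).x i).elt) := ih (by omega)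
        _ = (F t).map (lg (Sum.inr (t, i, false))) (((ch t).m i).elt) := by
            rw [← hf12, ← FunctorToTypes.map_comp_apply, l1]
        _ = (F t).map (lg (Sum.inr (t, i + 1, true))) (((ch t).x (i + 1)).elt) := by
            rw [← hf22, ← FunctorToTypes.map_comp_apply, l2]
  have hlink0 : (F t).map (lg (Sum.inl (src t))) (ys t)
      = (F t).map (lg (Sum.inr (t, 0, true))) (((ch t).x 0).elt) := by
    have hl : eqToHom (congrArg Elt.ob (h0 t).symm) ≫ lg (Sum.inr (t, 0, true))
        = lg (Sum.inl (src t)) := by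
      exact ObjectProperty.hom_ext _ (glueLeg_comm (fun v => (dob v).1) d.ed
        (s := Sum.inl (src t)) (s' := Sum.inr (t, 0, true))
        (show aob (src t) ⟶ ((ch t).x 0).ob from eqToHom (congrArg Elt.ob (h0 t).symm)).hom
        (congrArg (fun q => q.hom) (eqToHom_comp_hom (h0 t).symm)))
    exact conn_push_of_eq (h0 t).symm _ _ hl
  have hlinkn : (F t).map (lg (Sum.inl (tgt t))) (ye t)
      = (F t).map (lg (Sum.inr (t, (ch t).len, true))) (((ch t).x (ch t).len).elt) := by
    have hl : eqToHom (congrArg Elt.ob (hn t).symm) ≫ lg (Sum.inr (t, (ch t).len, true))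
        = lg (Sum.inl (tgt t)) := by
      exact ObjectProperty.hom_ext _ (glueLeg_comm (fun v => (dob v).1) d.ed
        (s := Sum.inl (tgt t)) (s' := Sum.inr (t, (ch t).len, true))
        (show aob (tgt t) ⟶ ((ch t).x (ch t).len).ob from
          eqToHom (congrArg Elt.ob (hn t).symm)).hom
        (congrArg (fun q => q.hom) (eqToHom_comp_hom (hn t).symm)))
    exact conn_push_of_eq (hn t).symm _ _ hl
  calc (F t).map (lg (Sum.inl (src t))) (ys t)
      = (F t).map (lg (Sum.inr (t, 0, true))) (((ch t).x 0).elt) := hlink0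
    _ = (F t).map (lg (Sum.inr (t, (ch t).len, true))) (((ch t).x (ch t).len).elt) :=
        chainPush _ le_rfl
    _ = (F t).map (lg (Sum.inl (tgt t))) (ye t) := hlinkn.symm

end ALevel

end Aux6

namespace Aux6

section Main

variable {C : Type u} [Category.{v} C]

theorem closedUnderLim (J : Type v) [Category.{v} J] :
    ObjectProperty.IsClosedUnderLimitsOfShape (fun F : SP C ⥤ Type v => IsSmallFunctor.{v} F)
      J := by
  constructor
  rintro _ ⟨⟨⟨D, π, hc⟩, hD⟩⟩
  set c : Cone D := Cone.mk _ π with hcdef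
  change IsSmallFunctor.{v} c.pt
  classical
  have hsmHom : ∀ (a Y : SP C), Small.{v} (a ⟶ Y) := fun a Y => by
    haveI := smallP_hom a Y
    exact small_map InducedCategory.homEquiv
  have hPex : ∀ j, ∃ P : SP C → Prop, Small.{v} (Subtype P) ∧ Covers P (D.obj j) :=
    fun j => covers_of_isSmallFunctor hsmHom (hD j)
  choose Pf hPsm hPcov using hPex
  set P0 : SP C → Prop := fun a => ∃ j, Pf j a with hP0
  haveI hP0small : Small.{v} (Subtype P0) := small_subtype_exists Pf hPsm
  have hP0cov : ∀ j, Covers P0 (D.obj j) := fun j => (hPcov j).mono (fun a ha => ⟨j, ha⟩)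
  -- pointwise sections interface
  have fact1 : ∀ (z : SP C) (x x' : c.pt.obj z),
      (∀ j, (c.π.app j).app z x = (c.π.app j).app z x') → x = x' := by
    intro z x x' hxx
    have hcz := isLimitOfPreserves ((evaluation (SP C) (Type v)).obj z) hc
    apply (Types.isLimitEquivSections hcz).injective
    apply Subtype.ext
    funext j
    rw [Types.isLimitEquivSections_apply hcz j x, Types.isLimitEquivSections_apply hcz j x']
    exact hxx j
  have fact2 : ∀ (z : SP C) (fam : ∀ j, (D.obj j).obj z),
      (∀ {j j'} (a : j ⟶ j'), (D.map a).app z (fam j) = fam j') →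
      ∃ x : c.pt.obj z, ∀ j, (c.π.app j).app z x = fam j := by
    intro z fam hfam
    have hcz := isLimitOfPreserves ((evaluation (SP C) (Type v)).obj z) hc
    refine ⟨(Types.isLimitEquivSections hcz).symm ⟨fam, fun {j j'} a => hfam a⟩, ?_⟩
    intro j
    exact Types.isLimitEquivSections_symm_apply hcz ⟨fam, fun {j j'} a => hfam a⟩ j
  have hπnat : ∀ {j : J} {z z' : SP C} (f : z ⟶ z') (y : c.pt.obj z),
      (c.π.app j).app z' (c.pt.map f y) = (D.obj j).map f ((c.π.app j).app z y) := by
    intro j z z' f y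
    have := types_congr_hom ((c.π.app j).naturality f) y
    simpa using this
  have hw : ∀ {j j' : J} (a : j ⟶ j') (z : SP C) (y : c.pt.obj z),
      (D.map a).app z ((c.π.app j).app z y) = (c.π.app j').app z y := by
    intro j j' a z y
    have := types_congr_hom (NatTrans.congr_app (c.w a) z) y
    simp only [NatTrans.comp_app, types_comp_apply] at this
    exact this
  set ArrJ := Σ p : J × J, p.1 ⟶ p.2 with hArrJ
  set V1 := J ⊕ ArrJ × ℕ × Bool with hV1
  set V2 := ULift.{v} Bool ⊕ J × ℕ × Bool with hV2
  set PΩ : SP C → Prop := fun a => ∃ n, stageP P0 V1 V2 n a with hPΩ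
  haveI hPΩsmall : Small.{v} (Subtype PΩ) :=
    small_subtype_exists _ (fun n => stageP_small P0 V1 V2 n)
  refine isSmallFunctor_of_covers PΩ hPΩsmall ?_
  intro X
  constructor
  · -- surjectivity
    intro x
    have hrep : ∀ j, ∃ e : Elt P0 (D.obj j) X, e.val = (c.π.app j).app X x :=
      fun j => (hP0cov j X).1 _
    choose ej hej using hrep
    have hchain : ∀ t : ArrJ, EltConn
        (⟨(ej t.1.1).ob, (ej t.1.1).hob, (ej t.1.1).hom,
          (D.map t.2).app _ ((ej t.1.1).elt)⟩ : Elt P0 (D.obj t.1.2) X)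
        ⟨(ej t.1.2).ob, (ej t.1.2).hob, (ej t.1.2).hom, (ej t.1.2).elt⟩ := by
      intro t
      refine (hP0cov t.1.2 X).2 _ _ ?_
      show (D.obj t.1.2).map (ej t.1.1).hom ((D.map t.2).app _ ((ej t.1.1).elt))
        = (D.obj t.1.2).map (ej t.1.2).hom ((ej t.1.2).elt)
      have hnat := types_congr_hom ((D.map t.2).naturality (ej t.1.1).hom) ((ej t.1.1).elt)
      simp only [types_comp_apply] at hnat
      rw [← hnat]
      show (D.map t.2).app X ((ej t.1.1).val) = (ej t.1.2).val
      rw [hej t.1.1, hej t.1.2]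
      exact hw t.2 X x
    obtain ⟨z, hz, u, g, hgu, hpush⟩ := keyLemma P0 X (fun t : ArrJ => D.obj t.1.2)
      (fun j => (ej j).ob) (fun j => (ej j).hob) (fun j => (ej j).hom)
      (fun t => t.1.1) (fun t => t.1.2)
      (fun t => (D.map t.2).app _ ((ej t.1.1).elt)) (fun t => (ej t.1.2).elt)
      hchain
    have hz1 : PΩ z := ⟨1, Or.inr (Or.inl hz)⟩
    have hfam : ∀ {j j'} (a : j ⟶ j'),
        (D.map a).app z ((D.obj j).map (g j) ((ej j).elt))
          = (D.obj j').map (g j') ((ej j').elt) := by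
      intro j j' a
      have hnat := types_congr_hom ((D.map a).naturality (g j)) ((ej j).elt)
      simp only [types_comp_apply] at hnat
      rw [hnat]
      exact hpush ⟨(j, j'), a⟩
    obtain ⟨y, hy⟩ := fact2 z (fun j => (D.obj j).map (g j) ((ej j).elt)) hfam
    refine ⟨⟨z, hz1, u, y⟩, ?_⟩
    apply fact1
    intro j
    show (c.π.app j).app X (c.pt.map u y) = (c.π.app j).app X x
    rw [hπnat u y, hy j, ← FunctorToTypes.map_comp_apply, hgu j]
    exact hej j
  · -- injectivity
    intro e1 e2 hv
    obtain ⟨m1, hm1⟩ := e1.hob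
    obtain ⟨m2, hm2⟩ := e2.hob
    have hob1 : stageP P0 V1 V2 (max m1 m2) e1.ob :=
      stageP_mono P0 V1 V2 (le_max_left _ _) _ hm1
    have hob2 : stageP P0 V1 V2 (max m1 m2) e2.ob :=
      stageP_mono P0 V1 V2 (le_max_right _ _) _ hm2
    set n0 := max m1 m2 with hn0
    have hch : ∀ j : J, EltConn
        (⟨e1.ob, hob1, e1.hom, (c.π.app j).app _ e1.elt⟩ :
          Elt (stageP P0 V1 V2 n0) (D.obj j) X)
        ⟨e2.ob, hob2, e2.hom, (c.π.app j).app _ e2.elt⟩ := by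
      intro j
      refine (((hPcov j).mono (fun a ha =>
        stageP_mono P0 V1 V2 (Nat.zero_le n0) a ⟨j, ha⟩)) X).2 _ _ ?_
      show (D.obj j).map e1.hom ((c.π.app j).app _ e1.elt)
        = (D.obj j).map e2.hom ((c.π.app j).app _ e2.elt)
      have hnat1 := types_congr_hom ((c.π.app j).naturality e1.hom) e1.elt
      have hnat2 := types_congr_hom ((c.π.app j).naturality e2.hom) e2.elt
      simp only [types_comp_apply] at hnat1 hnat2
      rw [← hnat1, ← hnat2]
      show (c.π.app j).app X e1.val = (c.π.app j).app X e2.val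
      rw [hv]
    obtain ⟨z, hz, u, g, hgu, hpush⟩ := keyLemma (stageP P0 V1 V2 n0) X
      (fun j : J => D.obj j)
      (fun b : ULift.{v} Bool => match b with | ⟨true⟩ => e1.ob | ⟨false⟩ => e2.ob)
      (fun b => match b with | ⟨true⟩ => hob1 | ⟨false⟩ => hob2)
      (fun b => match b with | ⟨true⟩ => e1.hom | ⟨false⟩ => e2.hom)
      (fun _ => ULift.up true) (fun _ => ULift.up false)
      (fun j => (c.π.app j).app _ e1.elt) (fun j => (c.π.app j).app _ e2.elt)
      hch
    have hzΩ : PΩ z := ⟨n0 + 1, Or.inr (Or.inr hz)⟩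
    have hfam : ∀ {j j'} (a : j ⟶ j'),
        (D.map a).app z ((D.obj j).map (g (ULift.up true)) ((c.π.app j).app _ e1.elt))
          = (D.obj j').map (g (ULift.up true)) ((c.π.app j').app _ e1.elt) := by
      intro j j' a
      have hnat := types_congr_hom ((D.map a).naturality (g (ULift.up true))) ((c.π.app j).app _ e1.elt)
      simp only [types_comp_apply] at hnat
      rw [hnat, hw a e1.ob e1.elt]
    obtain ⟨ym, hym⟩ := fact2 z (fun j => (D.obj j).map (g (ULift.up true)) ((c.π.app j).app _ e1.elt))
      hfam
    have hmid1 : c.pt.map (g (ULift.up true)) e1.elt = ym := by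
      apply fact1
      intro j
      rw [hπnat (g (ULift.up true)) e1.elt, hym j]
    have hmid2 : c.pt.map (g (ULift.up false)) e2.elt = ym := by
      apply fact1
      intro j
      rw [hπnat (g (ULift.up false)) e2.elt, hym j]
      exact (hpush j).symm
    have r1 : eltRel PΩ c.pt X e1 ⟨z, hzΩ, u, ym⟩ := ⟨g (ULift.up true), hgu (ULift.up true), hmid1⟩
    have r2 : eltRel PΩ c.pt X e2 ⟨z, hzΩ, u, ym⟩ := ⟨g (ULift.up false), hgu (ULift.up false), hmid2⟩
    exact .trans _ _ _ (.rel _ _ r1) (.symm _ _ (.rel _ _ r2))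

end Main

end Aux6

/-- For any category `L`, the category of small functors from `P(Lᵒᵖ)`
to `Set` (equivalently, `PK` for `K = P(Lᵒᵖ)ᵒᵖ`) is complete. -/
theorem statement6 (L : Type u) [Category.{v} L] :
    HasLimitsOfSize.{v, v}
      (ObjectProperty.FullSubcategory
        (fun F : SmallPresheaf Lᵒᵖ ⥤ Type v => IsSmallFunctor.{v} F)) := by
  constructor
  intro J hJ
  haveI := Aux6.closedUnderLim (C := Lᵒᵖᵒᵖ) J
  exact hasLimitsOfShape_of_closedUnderLimits J _
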